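/- Let Λ be a ring, M a finitely presented Λ-module, and I = ann_Λ(M) its annihilator. If M is a silting Λ-module (i.e., M = H⁰(P) up to additive equivalence for a 2-term silting complex P in K^b(proj Λ)), then M is a tilting Λ/I-module: M has projective dimension at most one over Λ/I, Ext¹_{Λ/I}(M,M) = 0, and there exists an exact sequence 0 → Λ/I → M₀ → M₁ → 0 with M₀, M₁ ∈ add M. -/

import Mathlib

universe u

/-- `M` is a (finitely presented) presilting `Λ`-module: it has a projective presentation
`P₁ --d--> P₀ → M → 0` by finitely generated projectives such that every morphism
from `P₁` to a module in `add M` factors through `d` (equivalently,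
`Hom_K(P, P[1]) = 0` for the associated 2-term complex `P`). -/
def IsPresiltingModule (Λ : Type u) [Ring Λ] (M : Type u) [AddCommGroup M] [Module Λ M] :
    Prop :=
  ∃ (P₁ P₀ : ModuleCat.{u} Λ), Module.Projective Λ P₁ ∧ Module.Projective Λ P₀ ∧
    Module.Finite Λ P₁ ∧ Module.Finite Λ P₀ ∧
    ∃ (d : P₁ →ₗ[Λ] P₀) (π : P₀ →ₗ[Λ] M), Function.Surjective π ∧
      LinearMap.range d = LinearMap.ker π ∧
      ∀ (n : ℕ) (g : P₁ →ₗ[Λ] (Fin n → M)), ∃ h : P₀ →ₗ[Λ] (Fin n → M), h.comp d = g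

/-- `M` is a silting `Λ`-module: `M` is presilting and there is an exact sequence
`Λ --f--> M₀ → M₁ → 0` where `f` is a left `add M`-approximation and `M₀, M₁ ∈ add M`
(we normalize `M₀ = Mⁿ` and realize `M₁` as the image of an idempotent on `Mᵐ`).
This is equivalent to `add M = add H⁰(P)` for a 2-term silting complex `P` in
`K^b(proj Λ)`. -/
def IsSiltingModule (Λ : Type u) [Ring Λ] (M : Type u) [AddCommGroup M] [Module Λ M] :
    Prop :=
  IsPresiltingModule Λ M ∧
  ∃ (n m : ℕ) (f : Λ →ₗ[Λ] (Fin n → M)) (g : (Fin n → M) →ₗ[Λ] (Fin m → M))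
      (e : (Fin m → M) →ₗ[Λ] (Fin m → M)),
    e.comp e = e ∧ LinearMap.range g = LinearMap.range e ∧
    LinearMap.ker g = LinearMap.range f ∧
    ∀ (k : ℕ) (h : Λ →ₗ[Λ] (Fin k → M)),
      ∃ u : (Fin n → M) →ₗ[Λ] (Fin k → M), u.comp f = h

/-- `M` is a tilting `Γ`-module: `M` has projective dimension at most one,
`Ext¹_Γ(M, M) = 0`, and there is an exact sequence `0 → Γ → M₀ → M₁ → 0`
with `M₀, M₁ ∈ add M`. -/
def IsTiltingModule (Γ : Type u) [Ring Γ] (M : Type u) [AddCommGroup M] [Module Γ M] :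
    Prop :=
  -- projective dimension at most one, witnessed by a finite projective resolution,
  -- together with `Ext¹_Γ(M,M) = 0` (extensions against `add M` lift along `d`)
  (∃ (Q₁ Q₀ : ModuleCat.{u} Γ), Module.Projective Γ Q₁ ∧ Module.Projective Γ Q₀ ∧
    Module.Finite Γ Q₁ ∧ Module.Finite Γ Q₀ ∧
    ∃ (d : Q₁ →ₗ[Γ] Q₀) (π : Q₀ →ₗ[Γ] M), Function.Injective d ∧ Function.Surjective π ∧
      LinearMap.range d = LinearMap.ker π ∧
      ∀ (n : ℕ) (g : Q₁ →ₗ[Γ] (Fin n → M)), ∃ h : Q₀ →ₗ[Γ] (Fin n → M), h.comp d = g) ∧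
  -- coresolution `0 → Γ → M₀ → M₁ → 0` with `M₀, M₁ ∈ add M`
  (∃ (n m : ℕ) (i : Γ →ₗ[Γ] (Fin n → M)) (q : (Fin n → M) →ₗ[Γ] (Fin m → M))
      (e : (Fin m → M) →ₗ[Γ] (Fin m → M)),
    e.comp e = e ∧ LinearMap.range q = LinearMap.range e ∧
    Function.Injective i ∧ LinearMap.range i = LinearMap.ker q)

namespace SiltingAux

variable {Λ Γ : Type u} [Ring Λ] [Ring Γ]

theorem smul_congr (φ : Λ →+* Γ) {X : Type u} [AddCommGroup X] [Module Λ X]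
    (hX : ∀ a : Λ, φ a = 0 → ∀ x : X, a • x = 0) {a b : Λ} (h : φ a = φ b) (x : X) :
    a • x = b • x := by
  have := hX (a - b) (by rw [map_sub, h, sub_self]) x
  rw [sub_smul] at this
  exact sub_eq_zero.mp this

/-- Transfer a `Λ`-module structure to a `Γ`-module structure along a surjective
ring homomorphism, provided the kernel acts trivially. -/
noncomputable def gmod (φ : Λ →+* Γ) (hφ : Function.Surjective φ) (X : Type u) [AddCommGroup X]
    [Module Λ X] (hX : ∀ a : Λ, φ a = 0 → ∀ x : X, a • x = 0) : Module Γ X where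
  smul γ x := Function.surjInv hφ γ • x
  one_smul x := by
    show Function.surjInv hφ 1 • x = x
    rw [smul_congr φ hX (a := Function.surjInv hφ 1) (b := 1)
      (by rw [Function.surjInv_eq hφ, map_one]) x, one_smul]
  mul_smul γ δ x := by
    have h1 := smul_congr φ hX (a := Function.surjInv hφ (γ * δ))
      (b := Function.surjInv hφ γ * Function.surjInv hφ δ)
      (by rw [Function.surjInv_eq hφ, map_mul, Function.surjInv_eq hφ, Function.surjInv_eq hφ]) x
    show Function.surjInv hφ (γ * δ) • x
      = Function.surjInv hφ γ • Function.surjInv hφ δ • x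
    rw [h1, mul_smul]
  smul_zero γ := smul_zero _
  smul_add γ x y := smul_add _ x y
  add_smul γ δ x := by
    have h1 := smul_congr φ hX (a := Function.surjInv hφ (γ + δ))
      (b := Function.surjInv hφ γ + Function.surjInv hφ δ)
      (by rw [Function.surjInv_eq hφ, map_add, Function.surjInv_eq hφ, Function.surjInv_eq hφ]) x
    show Function.surjInv hφ (γ + δ) • x
      = Function.surjInv hφ γ • x + Function.surjInv hφ δ • x
    rw [h1, add_smul]
  zero_smul x := by
    show Function.surjInv hφ 0 • x = 0
    exact hX _ (by rw [Function.surjInv_eq hφ]) x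

theorem gmod_compat (φ : Λ →+* Γ) (hφ : Function.Surjective φ) (X : Type u) [AddCommGroup X]
    [Module Λ X] (hX : ∀ a : Λ, φ a = 0 → ∀ x : X, a • x = 0) :
    letI := gmod φ hφ X hX
    ∀ (a : Λ) (x : X), φ a • x = a • x := by
  letI := gmod φ hφ X hX
  intro a x
  show Function.surjInv hφ (φ a) • x = a • x
  exact smul_congr φ hX (Function.surjInv_eq hφ (φ a)) x

/-- A `Λ`-linear map between modules with compatible `Γ`-structures is `Γ`-linear. -/
def toGamma (φ : Λ →+* Γ) (hφ : Function.Surjective φ) {X Y : Type u}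
    [AddCommGroup X] [Module Λ X] [Module Γ X] [AddCommGroup Y] [Module Λ Y] [Module Γ Y]
    (hcX : ∀ (a : Λ) (x : X), φ a • x = a • x) (hcY : ∀ (a : Λ) (y : Y), φ a • y = a • y)
    (f : X →ₗ[Λ] Y) : X →ₗ[Γ] Y where
  toFun := f
  map_add' := map_add f
  map_smul' γ x := by
    obtain ⟨a, rfl⟩ := hφ γ
    show f (φ a • x) = (RingHom.id Γ) (φ a) • f x
    rw [RingHom.id_apply, hcX, hcY, map_smul]

@[simp] theorem toGamma_apply (φ : Λ →+* Γ) (hφ : Function.Surjective φ) {X Y : Type u}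
    [AddCommGroup X] [Module Λ X] [Module Γ X] [AddCommGroup Y] [Module Λ Y] [Module Γ Y]
    (hcX : ∀ (a : Λ) (x : X), φ a • x = a • x) (hcY : ∀ (a : Λ) (y : Y), φ a • y = a • y)
    (f : X →ₗ[Λ] Y) (x : X) : toGamma φ hφ hcX hcY f x = f x := rfl

/-- A `Γ`-linear map between modules with compatible `Λ`-structures is `Λ`-linear. -/
def toLambda (φ : Λ →+* Γ) {X Y : Type u}
    [AddCommGroup X] [Module Λ X] [Module Γ X] [AddCommGroup Y] [Module Λ Y] [Module Γ Y]
    (hcX : ∀ (a : Λ) (x : X), φ a • x = a • x) (hcY : ∀ (a : Λ) (y : Y), φ a • y = a • y)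
    (f : X →ₗ[Γ] Y) : X →ₗ[Λ] Y where
  toFun := f
  map_add' := map_add f
  map_smul' a x := by
    show f (a • x) = (RingHom.id Λ) a • f x
    rw [RingHom.id_apply, ← hcX, map_smul, hcY]

@[simp] theorem toLambda_apply (φ : Λ →+* Γ) {X Y : Type u}
    [AddCommGroup X] [Module Λ X] [Module Γ X] [AddCommGroup Y] [Module Λ Y] [Module Γ Y]
    (hcX : ∀ (a : Λ) (x : X), φ a • x = a • x) (hcY : ∀ (a : Λ) (y : Y), φ a • y = a • y)
    (f : X →ₗ[Γ] Y) (x : X) : toLambda φ hcX hcY f x = f x := rfl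

theorem finite_gamma (φ : Λ →+* Γ) {X : Type u} [AddCommGroup X] [Module Λ X] [Module Γ X]
    (hcX : ∀ (a : Λ) (x : X), φ a • x = a • x) [Module.Finite Λ X] : Module.Finite Γ X := by
  obtain ⟨n, s, hs⟩ := Module.Finite.exists_fin (R := Λ) (M := X)
  let T : Submodule Γ X := Submodule.span Γ (Set.range s)
  let T' : Submodule Λ X :=
    { carrier := T
      add_mem' := fun hx hy => T.add_mem hx hy
      zero_mem' := T.zero_mem
      smul_mem' := fun a x hx => by
        have : φ a • x ∈ T := T.smul_mem (φ a) hx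
        rwa [hcX] at this }
  have hle : Submodule.span Λ (Set.range s) ≤ T' :=
    Submodule.span_le.mpr fun y hy => Submodule.subset_span hy
  have hT : T = ⊤ := Submodule.eq_top_iff'.mpr fun x =>
    hle (by rw [hs]; trivial : x ∈ Submodule.span Λ (Set.range s))
  exact ⟨hT ▸ Submodule.fg_span (Set.finite_range s)⟩


/-- The submodule `(ker φ) • Z`. -/
def qsub (φ : Λ →+* Γ) (Z : Type u) [AddCommGroup Z] [Module Λ Z] : Submodule Λ Z :=
  RingHom.ker φ • (⊤ : Submodule Λ Z)

theorem qsub_smul (φ : Λ →+* Γ) (Z : Type u) [AddCommGroup Z] [Module Λ Z] :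
    ∀ a : Λ, φ a = 0 → ∀ x : Z ⧸ qsub φ Z, a • x = 0 := by
  intro a ha x
  obtain ⟨z, rfl⟩ := Submodule.mkQ_surjective _ x
  rw [← map_smul]
  rw [show ((qsub φ Z).mkQ (a • z) = 0) ↔ a • z ∈ qsub φ Z from Submodule.Quotient.mk_eq_zero _]
  exact Submodule.smul_mem_smul (by rwa [RingHom.mem_ker]) trivial

theorem projective_gamma (φ : Λ →+* Γ) (hφ : Function.Surjective φ) (Z : Type u)
    [AddCommGroup Z] [Module Λ Z] [Module.Projective Λ Z]
    [Module Γ (Z ⧸ qsub φ Z)]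
    (hc : ∀ (a : Λ) (x : Z ⧸ qsub φ Z), φ a • x = a • x) :
    Module.Projective Γ (Z ⧸ qsub φ Z) := by
  apply Module.Projective.of_lifting_property''
  intro f hf
  letI : Module Λ ((Z ⧸ qsub φ Z) →₀ Γ) := Module.compHom _ φ
  have hcF : ∀ (a : Λ) (v : (Z ⧸ qsub φ Z) →₀ Γ), φ a • v = a • v := fun _ _ => rfl
  have hfΛ : Function.Surjective (toLambda φ hcF hc f) := hf
  obtain ⟨s₀, hs₀⟩ :=
    Module.projective_lifting_property (toLambda φ hcF hc f) ((qsub φ Z).mkQ) hfΛ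
  have hker : qsub φ Z ≤ LinearMap.ker s₀ := by
    have : RingHom.ker φ • (⊤ : Submodule Λ Z) ≤ LinearMap.ker s₀ := by
      rw [Submodule.smul_le]
      intro a ha z _
      rw [LinearMap.mem_ker, map_smul, ← hcF, RingHom.mem_ker.mp ha, zero_smul]
    exact this
  refine ⟨toGamma φ hφ hc hcF ((qsub φ Z).liftQ s₀ hker), ?_⟩
  apply LinearMap.ext
  intro x
  obtain ⟨z, rfl⟩ := Submodule.mkQ_surjective _ x
  have := LinearMap.congr_fun hs₀ z
  simpa using this


open CategoryTheory

/-- The main construction over the quotient ring: a finitely presented module with a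
presilting presentation whose factorization property holds, and which admits an
embedding of the ring into a finite power, has a length-one finite projective
resolution with the extension-lifting property. -/
theorem lemmaT {Γ : Type u} [Ring Γ] {M : Type u} [AddCommGroup M] [Module Γ M]
    (B₁ B₀ : Type u) [AddCommGroup B₁] [Module Γ B₁] [AddCommGroup B₀] [Module Γ B₀]
    (hP₁ : Module.Projective Γ B₁) (hP₀ : Module.Projective Γ B₀)
    (hF₁ : Module.Finite Γ B₁) (hF₀ : Module.Finite Γ B₀)
    (δ : B₁ →ₗ[Γ] B₀) (ϖ : B₀ →ₗ[Γ] M) (hϖ : Function.Surjective ϖ)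
    (hex : LinearMap.range δ = LinearMap.ker ϖ)
    (hfact : ∀ (k : Type) [Fintype k] (g : B₁ →ₗ[Γ] (k → M)),
      ∃ h : B₀ →ₗ[Γ] (k → M), h.comp δ = g)
    {n : ℕ} (ι₀ : Γ →ₗ[Γ] (Fin n → M)) (hι₀ : Function.Injective ι₀) :
    ∃ (Q₁ Q₀ : ModuleCat.{u} Γ), Module.Projective Γ Q₁ ∧ Module.Projective Γ Q₀ ∧
      Module.Finite Γ Q₁ ∧ Module.Finite Γ Q₀ ∧
      ∃ (d : Q₁ →ₗ[Γ] Q₀) (π : Q₀ →ₗ[Γ] M), Function.Injective d ∧ Function.Surjective π ∧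
        LinearMap.range d = LinearMap.ker π ∧
        ∀ (k : ℕ) (g : Q₁ →ₗ[Γ] (Fin k → M)), ∃ h : Q₀ →ₗ[Γ] (Fin k → M), h.comp d = g := by
  classical
  haveI := hP₁; haveI := hP₀; haveI := hF₁; haveI := hF₀
  set N : Submodule Γ B₁ := LinearMap.ker δ with hN
  -- an injective module containing `N`
  let Jcat : ModuleCat.{u} Γ := Injective.under (ModuleCat.of Γ ↥N)
  let ιm : ↥N →ₗ[Γ] ↥Jcat := (Injective.ι (ModuleCat.of Γ ↥N)).hom
  have hιinj : Function.Injective ιm := by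
    have : Mono (Injective.ι (ModuleCat.of Γ ↥N)) := inferInstance
    exact (ModuleCat.mono_iff_injective _).mp this
  -- extend the embedding of `N` to `B₁`
  let sc : ModuleCat.of Γ ↥N ⟶ ModuleCat.of Γ B₁ := ModuleCat.ofHom N.subtype
  haveI : Mono sc := (ModuleCat.mono_iff_injective sc).mpr N.injective_subtype
  let ψc : ModuleCat.of Γ B₁ ⟶ Jcat :=
    Injective.factorThru (Injective.ι (ModuleCat.of Γ ↥N)) sc
  let ψ : B₁ →ₗ[Γ] ↥Jcat := ψc.hom
  have hψ : ∀ z : ↥N, ψ (N.subtype z) = ιm z := by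
    intro z
    have h2 := Injective.comp_factorThru (Injective.ι (ModuleCat.of Γ ↥N)) sc
    exact (LinearMap.congr_fun (congrArg ModuleCat.Hom.hom h2) z).symm ▸ rfl
  -- the quotient of `J` by (the image of) `N`
  set S : Submodule Γ ↥Jcat := LinearMap.range ιm with hS
  let q : ↥Jcat →ₗ[Γ] (↥Jcat ⧸ S) := S.mkQ
  let c : B₁ →ₗ[Γ] (↥Jcat ⧸ S) := q.comp ψ
  -- generators of B₁
  obtain ⟨t, y, hy⟩ := Module.Finite.exists_fin (R := Γ) (M := B₁)
  have hz : ∀ j : Fin t, ∃ zz : ↥Jcat, S.mkQ zz = c (y j) :=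
    fun j => Submodule.mkQ_surjective S _
  choose z hz using hz
  -- extend `γ ↦ γ • z j` along the embedding `ι₀ : Γ ↪ Mⁿ`
  haveI : Mono (ModuleCat.ofHom ι₀ : ModuleCat.of Γ Γ ⟶ ModuleCat.of Γ (Fin n → M)) :=
    (ModuleCat.mono_iff_injective _).mpr hι₀
  let σj : Fin t → (ModuleCat.of Γ Γ ⟶ Jcat) := fun j =>
    ModuleCat.ofHom (LinearMap.toSpanSingleton Γ ↥Jcat (z j))
  let wc : Fin t → ((Fin n → M) →ₗ[Γ] ↥Jcat) := fun j =>
    (Injective.factorThru (σj j) (ModuleCat.ofHom ι₀) : ModuleCat.of Γ (Fin n → M) ⟶ Jcat).hom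
  have hw : ∀ (j : Fin t) (γ : Γ), wc j (ι₀ γ) = γ • z j := by
    intro j γ
    have h2 := Injective.comp_factorThru (σj j) (ModuleCat.ofHom ι₀)
    have h3 := LinearMap.congr_fun (congrArg ModuleCat.Hom.hom h2) γ
    exact h3.symm ▸ rfl
  -- the map `V` out of a big finite power of `M`
  let V : ((Fin t × Fin n) → M) →ₗ[Γ] (↥Jcat ⧸ S) :=
    ∑ j : Fin t, (q.comp (wc j)).comp (LinearMap.funLeft Γ M (fun b => (j, b)))
  have hVy : ∀ j : Fin t, c (y j) ∈ LinearMap.range V := by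
    intro j
    refine ⟨fun p => if p.1 = j then ι₀ 1 p.2 else 0, ?_⟩
    have hV1 : ∀ (F : (Fin t × Fin n) → M),
        V F = ∑ j' : Fin t, q (wc j' (fun b => F (j', b))) := by
      intro F
      rw [show V F = ∑ j' : Fin t,
        ((q.comp (wc j')).comp (LinearMap.funLeft Γ M (fun b => (j', b)))) F from
        LinearMap.sum_apply _ _ _]
      rfl
    rw [hV1]
    rw [Finset.sum_eq_single j]
    · have : (fun b => if (j, b).1 = j then ι₀ 1 (j, b).2 else 0) = ι₀ 1 := by
        funext b; simp
      rw [this, hw j 1, one_smul, hz j]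
    · intro j' _ hj'
      have : (fun b => if (j', b).1 = j then ι₀ 1 (j', b).2 else 0) = (0 : Fin n → M) := by
        funext b; simp [hj']
      rw [this, map_zero, map_zero]
    · intro h; exact absurd (Finset.mem_univ j) h
  have hrange : ∀ x : B₁, c x ∈ LinearMap.range V := by
    have hle : LinearMap.range c ≤ LinearMap.range V := by
      rw [LinearMap.range_eq_map, ← hy, Submodule.map_span, Submodule.span_le]
      rintro _ ⟨_, ⟨j, rfl⟩, rfl⟩
      exact hVy j
    exact fun x => hle ⟨x, rfl⟩
  -- factor `c` through `V` using projectivity of `B₁`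
  obtain ⟨c₁, hc₁⟩ := Module.projective_lifting_property V.rangeRestrict
    (c.codRestrict (LinearMap.range V) hrange) V.surjective_rangeRestrict
  have hVc₁ : V.comp c₁ = c := by
    apply LinearMap.ext; intro x
    have h9 : (V.rangeRestrict.comp c₁) x = (c.codRestrict (LinearMap.range V) hrange) x := by
      rw [hc₁]
    exact congrArg Subtype.val h9
  -- use the factorization property of the presentation
  obtain ⟨h₂, hh₂⟩ := hfact (Fin t × Fin n) c₁
  have hHδ : (V.comp h₂).comp δ = c := by rw [LinearMap.comp_assoc, hh₂, hVc₁]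
  -- lift `V ∘ h₂` along the quotient map `q` using projectivity of `B₀`
  obtain ⟨H, hH⟩ := Module.projective_lifting_property q (V.comp h₂)
    (Submodule.mkQ_surjective S)
  -- the corrected map `θ` lands in `S`
  let θ : B₁ →ₗ[Γ] ↥Jcat := ψ - H.comp δ
  have hθ : ∀ x : B₁, θ x ∈ S := by
    intro x
    have e1 : q (θ x) = c x - q (H (δ x)) := by
      show q (ψ x - H (δ x)) = c x - q (H (δ x))
      rw [map_sub]; rfl
    have e2 : q (H (δ x)) = c x :=
      (LinearMap.congr_fun hH (δ x)).trans (LinearMap.congr_fun hHδ x)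
    have h5 : θ x ∈ LinearMap.ker q := LinearMap.mem_ker.mpr (by rw [e1, e2, sub_self])
    rwa [Submodule.ker_mkQ] at h5
  -- the retraction `τ : B₁ → N`
  let eN : ↥N ≃ₗ[Γ] ↥S := LinearEquiv.ofInjective ιm hιinj
  let τ : B₁ →ₗ[Γ] ↥N := (eN.symm : ↥S →ₗ[Γ] ↥N).comp (θ.codRestrict S hθ)
  have hιτ : ∀ x : B₁, ιm (τ x) = θ x := by
    intro x
    have h7 := LinearEquiv.ofInjective_symm_apply (f := ιm) (h := hιinj)
      ((θ.codRestrict S hθ) x)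
    exact h7
  have hτN : ∀ zz : ↥N, τ (N.subtype zz) = zz := by
    intro zz
    apply hιinj
    rw [hιτ]
    have h8 : δ (N.subtype zz) = 0 := zz.2
    show ψ (N.subtype zz) - H (δ (N.subtype zz)) = ιm zz
    rw [h8, map_zero, sub_zero, hψ]
  -- the idempotent and the split complement of `N` in `B₁`
  let τ' : B₁ →ₗ[Γ] B₁ := N.subtype.comp τ
  have hτ'N : ∀ x : B₁, x ∈ N → τ' x = x := by
    intro x hx
    show N.subtype (τ (N.subtype ⟨x, hx⟩)) = x
    rw [hτN ⟨x, hx⟩]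
    rfl
  have hτ'mem : ∀ x : B₁, τ' x ∈ N := fun x => (τ x).2
  have hτ'idem : ∀ x : B₁, τ' (τ' x) = τ' x := fun x => hτ'N _ (hτ'mem x)
  let Q₁sub : Submodule Γ B₁ := LinearMap.ker τ'
  have hQmem : ∀ x : B₁, x - τ' x ∈ Q₁sub := by
    intro x
    show τ' (x - τ' x) = 0
    rw [map_sub, hτ'idem, sub_self]
  let ρ : B₁ →ₗ[Γ] ↥Q₁sub := (LinearMap.id - τ').codRestrict Q₁sub hQmem
  have hρ : ∀ x : ↥Q₁sub, ρ (Q₁sub.subtype x) = x := by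
    intro x
    apply Subtype.ext
    show (x : B₁) - τ' (x : B₁) = (x : B₁)
    rw [x.2, sub_zero]
  have hρsurj : Function.Surjective ρ := fun x => ⟨Q₁sub.subtype x, hρ x⟩
  have hδτ' : ∀ x : B₁, δ (τ' x) = 0 := fun x => (τ x).2
  -- assemble the two projective modules
  refine ⟨ModuleCat.of Γ ↥Q₁sub, ModuleCat.of Γ B₀, ?_, hP₀, ?_, hF₀,
    δ.comp Q₁sub.subtype, ϖ, ?_, hϖ, ?_, ?_⟩
  · exact Module.Projective.of_split Q₁sub.subtype ρ (LinearMap.ext hρ)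
  · exact Module.Finite.of_surjective ρ hρsurj
  · -- injectivity
    have key : ∀ x₁ x₂ : ↥Q₁sub, δ (Q₁sub.subtype x₁) = δ (Q₁sub.subtype x₂) → x₁ = x₂ := by
      intro x₁ x₂ h12
      have hmem : ((x₁ : B₁) - (x₂ : B₁)) ∈ N := by
        show (x₁ : B₁) - (x₂ : B₁) ∈ LinearMap.ker δ
        rw [LinearMap.mem_ker, map_sub]
        exact sub_eq_zero.mpr h12
      have h17 : (x₁ : B₁) - (x₂ : B₁) = 0 := by
        have h13 : τ' ((x₁ : B₁) - (x₂ : B₁)) = 0 := by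
          rw [map_sub, x₁.2, x₂.2, sub_self]
        rw [← hτ'N _ hmem, h13]
      exact Subtype.ext (sub_eq_zero.mp h17)
    exact fun a b hab => key a b hab
  · -- range = kernel
    rw [← hex]
    apply le_antisymm
    · rintro _ ⟨x, rfl⟩
      exact ⟨Q₁sub.subtype x, rfl⟩
    · rintro _ ⟨x, rfl⟩
      refine ⟨ρ x, ?_⟩
      show δ (x - τ' x) = δ x
      rw [map_sub, hδτ' x, sub_zero]
  · -- lifting property
    intro k g
    let g' : ↥Q₁sub →ₗ[Γ] (Fin k → M) := g
    obtain ⟨h, hh⟩ := hfact (Fin k) (g'.comp ρ)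
    refine ⟨h, ?_⟩
    have key : ∀ x : ↥Q₁sub, h (δ (Q₁sub.subtype x)) = g' x := by
      intro x
      have h14 := LinearMap.congr_fun hh (Q₁sub.subtype x)
      have h15 : (g'.comp ρ) (Q₁sub.subtype x) = g' x := by
        show g' (ρ (Q₁sub.subtype x)) = g' x
        rw [hρ]
      exact h14.trans h15
    exact LinearMap.ext fun x => key x

end SiltingAux

/-- **A silting module is a tilting module over the quotient by its annihilator.**
Let `Λ` be a ring, `M` a finitely presented `Λ`-module, and `I = ann_Λ(M)`.
If `M` is a silting `Λ`-module, then `M` is a tilting `Λ/I`-module.  Here the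
quotient `Λ/I` is represented by any ring `Γ` together with a surjective ring
homomorphism `φ : Λ → Γ` whose kernel is exactly the annihilator of `M`, and the
`Γ`-module structure of `M` is compatible with `φ`. -/
theorem silting_is_tilting_over_quotient_by_annihilator
    (Λ : Type u) [Ring Λ]
    (M : Type u) [AddCommGroup M] [Module Λ M] [Module.Finite Λ M]
    (Γ : Type u) [Ring Γ] (φ : Λ →+* Γ)
    (hφsurj : Function.Surjective φ)
    -- the kernel of `φ` is `I = ann_Λ(M)`
    (hker : ∀ a : Λ, φ a = 0 ↔ ∀ x : M, a • x = 0)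
    [Module Γ M]
    -- the `Γ = Λ/I`-module structure on `M` is induced by the `Λ`-structure via `φ`
    (hcompat : ∀ (a : Λ) (x : M), φ a • x = a • x)
    (hsilting : IsSiltingModule Λ M) :
    IsTiltingModule Γ M := by
  classical
  obtain ⟨⟨P₁c, P₀c, hprj₁, hprj₀, hfin₁, hfin₀, d, π, hπsurj, hexΛ, hfactΛ⟩, hs2⟩ := hsilting
  obtain ⟨n, m, f, g, e, hee, hge, hkerg, happrox⟩ := hs2
  haveI := hprj₁; haveI := hprj₀; haveI := hfin₁; haveI := hfin₀
  -- compatibility of the two actions on finite powers of `M`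
  have hcM : ∀ (k : ℕ) (a : Λ) (v : Fin k → M), φ a • v = a • v :=
    fun k a v => funext fun j => hcompat a (v j)
  -- basic facts about the approximation `f`
  have hf1 : ∀ a : Λ, f a = a • f 1 := fun a => by
    rw [← map_smul, smul_eq_mul, mul_one]
  have hkerf : ∀ a : Λ, f a = 0 → φ a = 0 := by
    intro a ha
    rw [hker]
    intro x
    obtain ⟨u, hu⟩ := happrox 1 (LinearMap.toSpanSingleton Λ (Fin 1 → M) (fun _ => x))
    have h1 : u (f a) = a • (fun _ => x : Fin 1 → M) := by
      have h2 := LinearMap.congr_fun hu a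
      rwa [LinearMap.comp_apply, LinearMap.toSpanSingleton_apply] at h2
    calc a • x = (a • (fun _ => x : Fin 1 → M)) 0 := rfl
      _ = u (f a) 0 := by rw [h1]
      _ = 0 := by rw [ha, map_zero]; rfl
  -- the embedding of `Γ` into `Mⁿ`
  set ι₀ : Γ →ₗ[Γ] (Fin n → M) := LinearMap.toSpanSingleton Γ (Fin n → M) (f 1) with hι₀def
  have hι₀f : ∀ a : Λ, ι₀ (φ a) = f a := by
    intro a
    show φ a • f 1 = f a
    rw [hcM n, ← hf1]
  have hι₀inj : Function.Injective ι₀ := by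
    have key : ∀ γ : Γ, ι₀ γ = 0 → γ = 0 := by
      intro γ h0
      obtain ⟨a, rfl⟩ := hφsurj γ
      exact hkerf a (by rwa [hι₀f] at h0)
    intro γ₁ γ₂ h12
    exact sub_eq_zero.mp (key (γ₁ - γ₂) (by rw [map_sub, h12, sub_self]))
  -- the quotient modules with their `Γ`-structures
  letI gm₁ : Module Γ (↥P₁c ⧸ SiltingAux.qsub φ ↥P₁c) :=
    SiltingAux.gmod φ hφsurj _ (SiltingAux.qsub_smul φ ↥P₁c)
  letI gm₀ : Module Γ (↥P₀c ⧸ SiltingAux.qsub φ ↥P₀c) :=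
    SiltingAux.gmod φ hφsurj _ (SiltingAux.qsub_smul φ ↥P₀c)
  have hc₁ : ∀ (a : Λ) (x : ↥P₁c ⧸ SiltingAux.qsub φ ↥P₁c), φ a • x = a • x :=
    SiltingAux.gmod_compat φ hφsurj _ (SiltingAux.qsub_smul φ ↥P₁c)
  have hc₀ : ∀ (a : Λ) (x : ↥P₀c ⧸ SiltingAux.qsub φ ↥P₀c), φ a • x = a • x :=
    SiltingAux.gmod_compat φ hφsurj _ (SiltingAux.qsub_smul φ ↥P₀c)
  -- the induced presentation over `Γ`
  have hmapd : SiltingAux.qsub φ ↥P₁c ≤ (SiltingAux.qsub φ ↥P₀c).comap d := by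
    rw [← Submodule.map_le_iff_le_comap]
    have h3 : Submodule.map d (RingHom.ker φ • (⊤ : Submodule Λ ↥P₁c))
        ≤ RingHom.ker φ • (⊤ : Submodule Λ ↥P₀c) := by
      rw [Submodule.map_smul'']
      exact Submodule.smul_mono le_rfl le_top
    exact h3
  set δ : (↥P₁c ⧸ SiltingAux.qsub φ ↥P₁c) →ₗ[Γ] (↥P₀c ⧸ SiltingAux.qsub φ ↥P₀c) :=
    SiltingAux.toGamma φ hφsurj hc₁ hc₀ (Submodule.mapQ _ _ d hmapd) with hδdef
  have hπker : SiltingAux.qsub φ ↥P₀c ≤ LinearMap.ker π := by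
    have h4 : RingHom.ker φ • (⊤ : Submodule Λ ↥P₀c) ≤ LinearMap.ker π := by
      rw [Submodule.smul_le]
      intro a ha x _
      rw [LinearMap.mem_ker, map_smul]
      exact (hker a).mp (RingHom.mem_ker.mp ha) (π x)
    exact h4
  set ϖ : (↥P₀c ⧸ SiltingAux.qsub φ ↥P₀c) →ₗ[Γ] M :=
    SiltingAux.toGamma φ hφsurj hc₀ hcompat ((SiltingAux.qsub φ ↥P₀c).liftQ π hπker)
    with hϖdef
  have hδmk : ∀ z : ↥P₁c,
      δ ((SiltingAux.qsub φ ↥P₁c).mkQ z) = (SiltingAux.qsub φ ↥P₀c).mkQ (d z) := by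
    intro z
    show Submodule.mapQ _ _ d hmapd ((SiltingAux.qsub φ ↥P₁c).mkQ z) = _
    rw [Submodule.mkQ_apply, Submodule.mapQ_apply, Submodule.mkQ_apply]
  have hϖmk : ∀ p : ↥P₀c, ϖ ((SiltingAux.qsub φ ↥P₀c).mkQ p) = π p := by
    intro p
    show ((SiltingAux.qsub φ ↥P₀c).liftQ π hπker) ((SiltingAux.qsub φ ↥P₀c).mkQ p) = π p
    rw [Submodule.mkQ_apply, Submodule.liftQ_apply]
  have hϖsurj : Function.Surjective ϖ := by
    intro x
    obtain ⟨p, hp⟩ := hπsurj x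
    exact ⟨(SiltingAux.qsub φ ↥P₀c).mkQ p, (hϖmk p).trans hp⟩
  have hexΓ : LinearMap.range δ = LinearMap.ker ϖ := by
    apply le_antisymm
    · rintro _ ⟨w, rfl⟩
      obtain ⟨z, rfl⟩ := Submodule.mkQ_surjective _ w
      rw [LinearMap.mem_ker, hδmk, hϖmk]
      have h5 : d z ∈ LinearMap.ker π := hexΛ ▸ LinearMap.mem_range_self d z
      exact LinearMap.mem_ker.mp h5
    · intro x hx
      obtain ⟨p, rfl⟩ := Submodule.mkQ_surjective _ x
      have h6 : π p = 0 := by rw [← hϖmk]; exact LinearMap.mem_ker.mp hx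
      have h7 : p ∈ LinearMap.range d := hexΛ.symm ▸ LinearMap.mem_ker.mpr h6
      obtain ⟨z, rfl⟩ := h7
      exact ⟨(SiltingAux.qsub φ ↥P₁c).mkQ z, (hδmk z).symm ▸ rfl⟩
  -- projectivity and finiteness over `Γ`
  have hPB₁ : Module.Projective Γ (↥P₁c ⧸ SiltingAux.qsub φ ↥P₁c) :=
    SiltingAux.projective_gamma φ hφsurj ↥P₁c hc₁
  have hPB₀ : Module.Projective Γ (↥P₀c ⧸ SiltingAux.qsub φ ↥P₀c) :=
    SiltingAux.projective_gamma φ hφsurj ↥P₀c hc₀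
  haveI : Module.Finite Λ (↥P₁c ⧸ SiltingAux.qsub φ ↥P₁c) :=
    Module.Finite.of_surjective _ (Submodule.mkQ_surjective (SiltingAux.qsub φ ↥P₁c))
  haveI : Module.Finite Λ (↥P₀c ⧸ SiltingAux.qsub φ ↥P₀c) :=
    Module.Finite.of_surjective _ (Submodule.mkQ_surjective (SiltingAux.qsub φ ↥P₀c))
  have hFB₁ : Module.Finite Γ (↥P₁c ⧸ SiltingAux.qsub φ ↥P₁c) :=
    SiltingAux.finite_gamma φ hc₁
  have hFB₀ : Module.Finite Γ (↥P₀c ⧸ SiltingAux.qsub φ ↥P₀c) :=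
    SiltingAux.finite_gamma φ hc₀
  -- the factorization property over `Γ`
  have hfactFin : ∀ (kk : ℕ) (g' : (↥P₁c ⧸ SiltingAux.qsub φ ↥P₁c) →ₗ[Γ] (Fin kk → M)),
      ∃ h : (↥P₀c ⧸ SiltingAux.qsub φ ↥P₀c) →ₗ[Γ] (Fin kk → M), h.comp δ = g' := by
    intro kk g'
    obtain ⟨h₀, hh₀⟩ := hfactΛ kk
      ((SiltingAux.toLambda φ hc₁ (hcM kk) g').comp (SiltingAux.qsub φ ↥P₁c).mkQ)
    have hker0 : SiltingAux.qsub φ ↥P₀c ≤ LinearMap.ker h₀ := by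
      have h8 : RingHom.ker φ • (⊤ : Submodule Λ ↥P₀c) ≤ LinearMap.ker h₀ := by
        rw [Submodule.smul_le]
        intro a ha x _
        rw [LinearMap.mem_ker, map_smul]
        exact funext fun j => (hker a).mp (RingHom.mem_ker.mp ha) (h₀ x j)
      exact h8
    refine ⟨SiltingAux.toGamma φ hφsurj hc₀ (hcM kk)
      ((SiltingAux.qsub φ ↥P₀c).liftQ h₀ hker0), ?_⟩
    apply LinearMap.ext
    intro x
    obtain ⟨z, rfl⟩ := Submodule.mkQ_surjective _ x
    rw [LinearMap.comp_apply, hδmk]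
    show ((SiltingAux.qsub φ ↥P₀c).liftQ h₀ hker0) ((SiltingAux.qsub φ ↥P₀c).mkQ (d z))
      = g' ((SiltingAux.qsub φ ↥P₁c).mkQ z)
    rw [Submodule.mkQ_apply, Submodule.liftQ_apply]
    exact LinearMap.congr_fun hh₀ z
  have hfactκ : ∀ (k : Type) [Fintype k]
      (g' : (↥P₁c ⧸ SiltingAux.qsub φ ↥P₁c) →ₗ[Γ] (k → M)),
      ∃ h : (↥P₀c ⧸ SiltingAux.qsub φ ↥P₀c) →ₗ[Γ] (k → M), h.comp δ = g' := by
    intro k _ g'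
    let E : (Fin (Fintype.card k) → M) ≃ₗ[Γ] (k → M) :=
      LinearEquiv.funCongrLeft Γ M (Fintype.equivFin k)
    obtain ⟨h', hh'⟩ := hfactFin (Fintype.card k)
      ((E.symm : (k → M) →ₗ[Γ] (Fin (Fintype.card k) → M)).comp g')
    refine ⟨(E : (Fin (Fintype.card k) → M) →ₗ[Γ] (k → M)).comp h', ?_⟩
    apply LinearMap.ext
    intro x
    have h9 := LinearMap.congr_fun hh' x
    show E (h' (δ x)) = g' x
    rw [show h' (δ x) = E.symm (g' x) from h9, LinearEquiv.apply_symm_apply]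
  constructor
  · exact SiltingAux.lemmaT _ _ hPB₁ hPB₀ hFB₁ hFB₀ δ ϖ hϖsurj hexΓ hfactκ ι₀ hι₀inj
  · refine ⟨n, m, ι₀, SiltingAux.toGamma φ hφsurj (hcM n) (hcM m) g,
      SiltingAux.toGamma φ hφsurj (hcM m) (hcM m) e, ?_, ?_, hι₀inj, ?_⟩
    · apply LinearMap.ext
      intro v
      show e (e v) = e v
      have h20 := LinearMap.congr_fun hee v
      rwa [LinearMap.comp_apply] at h20
    · apply Submodule.ext
      intro x
      simp only [LinearMap.mem_range]
      constructor
      · rintro ⟨v, rfl⟩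
        have h10 : g v ∈ LinearMap.range e := hge ▸ LinearMap.mem_range_self g v
        obtain ⟨w, hw⟩ := h10
        exact ⟨w, hw⟩
      · rintro ⟨v, rfl⟩
        have h11 : e v ∈ LinearMap.range g := hge.symm ▸ LinearMap.mem_range_self e v
        obtain ⟨w, hw⟩ := h11
        exact ⟨w, hw⟩
    · apply Submodule.ext
      intro x
      constructor
      · rintro ⟨γ, rfl⟩
        obtain ⟨a, rfl⟩ := hφsurj γ
        rw [LinearMap.mem_ker]
        have h12 : g (ι₀ (φ a)) = 0 := by
          rw [hι₀f]
          exact LinearMap.mem_ker.mp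
            (by rw [hkerg]; exact LinearMap.mem_range_self f a)
        exact h12
      · intro hx
        have h13 := LinearMap.mem_ker.mp hx
        have h14 : x ∈ LinearMap.range f := by
          rw [← hkerg, LinearMap.mem_ker]
          exact h13
        obtain ⟨a, rfl⟩ := h14
        exact ⟨φ a, hι₀f a⟩
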